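/- Let E and F be finite-dimensional real inner product spaces, δ : E → F a linear map with adjoint δ*, and L := δ* ∘ δ. Then for every initial condition x₀ ∈ E, the solution t ↦ exp(−t L) x₀ of the Laplacian flow ẋ = −L x converges as t → ∞ to the orthogonal projection of x₀ onto ker(δ): lim_{t→∞} exp(−t L) x₀ = P_{ker δ}(x₀), where P_{ker δ} denotes orthogonal projection onto the subspace ker(δ) ⊆ E. -/

import Mathlib

open scoped RealInnerProductSpace
open Nat

/-- If `x` is an eigenvector of `A` with eigenvalue `μ`, then `exp A x = exp μ • x`. -/
lemma exp_apply_eigenvector {E : Type*} [NormedAddCommGroup E] [NormedSpace ℝ E]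
    [CompleteSpace E] (A : E →L[ℝ] E) (x : E) (μ : ℝ) (h : A x = μ • x) :
    NormedSpace.exp A x = Real.exp μ • x := by
  have hpow : ∀ n : ℕ, (A ^ n) x = μ ^ n • x := by
    intro n
    induction n with
    | zero => simp
    | succ n ih =>
      rw [pow_succ, pow_succ, ContinuousLinearMap.mul_apply, h, map_smul, ih,
        smul_smul, mul_comm]
  have hsum : Summable fun n : ℕ => (n !⁻¹ : ℝ) • A ^ n :=
    NormedSpace.expSeries_summable' (𝕂 := ℝ) A
  have : NormedSpace.exp A x = ∑' n : ℕ, ((n !⁻¹ : ℝ) • A ^ n) x := by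
    rw [NormedSpace.exp_eq_tsum ℝ]
    exact (ContinuousLinearMap.apply ℝ E x).map_tsum hsum
  rw [this]
  have h2 : ∀ n : ℕ, ((n !⁻¹ : ℝ) • A ^ n) x = ((n !⁻¹ : ℝ) * μ ^ n) • x := by
    intro n
    rw [ContinuousLinearMap.smul_apply, hpow, smul_smul]
  simp_rw [h2]
  rw [show (fun n : ℕ => ((n !⁻¹ : ℝ) * μ ^ n) • x) = fun n : ℕ => ((n !⁻¹ : ℝ) • μ ^ n) • x
    from funext fun n => by rw [smul_eq_mul],
    (NormedSpace.expSeries_summable' (𝕂 := ℝ) μ).tsum_smul_const]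
  congr 1
  rw [Real.exp_eq_exp_ℝ, NormedSpace.exp_eq_tsum ℝ]

/-- **Convergence of the Laplacian flow to the projection onto `ker δ`.**
For `L = δ* ∘ δ`, the solution `t ↦ exp (-t L) x₀` of `ẋ = -L x` converges, as
`t → ∞`, to the orthogonal projection of `x₀` onto `ker δ`. -/
theorem laplacian_flow_tendsto_orthogonalProjection {E F : Type*}
    [NormedAddCommGroup E] [InnerProductSpace ℝ E] [FiniteDimensional ℝ E]
    [NormedAddCommGroup F] [InnerProductSpace ℝ F] [FiniteDimensional ℝ F]
    (δ : E →ₗ[ℝ] F) (x₀ : E) :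
    Filter.Tendsto
      (fun t : ℝ =>
        NormedSpace.exp
          (-(t • (LinearMap.toContinuousLinearMap (LinearMap.adjoint δ ∘ₗ δ)))) x₀)
      Filter.atTop
      (nhds ((Submodule.orthogonalProjectionOnto (LinearMap.ker δ) x₀ : E))) := by
  set T : E →ₗ[ℝ] E := LinearMap.adjoint δ ∘ₗ δ with hTdef
  have hT : T.IsSymmetric := fun x y => by
    simp only [hTdef, LinearMap.comp_apply]
    rw [LinearMap.adjoint_inner_left, LinearMap.adjoint_inner_right]
  set n := Module.finrank ℝ E with hn
  have hn' : Module.finrank ℝ E = n := rfl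
  set b := hT.eigenvectorBasis hn' with hb
  set μ := hT.eigenvalues hn' with hμ
  have hTb : ∀ i, T (b i) = μ i • b i := fun i => hT.apply_eigenvectorBasis hn' i
  -- eigenvalues are nonnegative
  have hμnonneg : ∀ i, 0 ≤ μ i := by
    intro i
    have h1 : ⟪T (b i), b i⟫ = ⟪δ (b i), δ (b i)⟫ := by
      rw [hTdef]
      simp only [LinearMap.comp_apply]
      rw [LinearMap.adjoint_inner_left]
    have h2 : ⟪T (b i), b i⟫ = μ i * (‖b i‖ : ℝ) ^ 2 := by
      rw [hTb i, real_inner_smul_left, real_inner_self_eq_norm_sq]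
    have hnorm : ‖b i‖ = 1 := b.orthonormal.1 i
    have := h1 ▸ h2
    rw [hnorm] at this
    simp only [one_pow, mul_one] at this
    rw [← this]
    exact real_inner_self_nonneg
  -- eigenvalue zero iff eigenvector in ker δ
  have hker : ∀ i, μ i = 0 ↔ b i ∈ LinearMap.ker δ := by
    intro i
    constructor
    · intro h0
      have hT0 : T (b i) = 0 := by rw [hTb i, h0, zero_smul]
      have : ⟪δ (b i), δ (b i)⟫ = 0 := by
        have h1 : ⟪T (b i), b i⟫ = ⟪δ (b i), δ (b i)⟫ := by
          rw [hTdef]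
          simp only [LinearMap.comp_apply]
          rw [LinearMap.adjoint_inner_left]
        rw [← h1, hT0, inner_zero_left]
      rw [LinearMap.mem_ker]
      exact inner_self_eq_zero.mp this
    · intro hmem
      have hT0 : T (b i) = 0 := by
        rw [hTdef]
        simp only [LinearMap.comp_apply, LinearMap.mem_ker.mp hmem, map_zero]
      rw [hTb i] at hT0
      have hbne : b i ≠ 0 := b.toBasis.ne_zero i
      rcases smul_eq_zero.mp hT0 with h | h
      · exact h
      · exact absurd h hbne
  -- eigenvectors with nonzero eigenvalue are orthogonal to ker δ
  have horth : ∀ i, μ i ≠ 0 → ∀ k ∈ LinearMap.ker δ, ⟪k, b i⟫ = 0 := by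
    intro i hi k hk
    have hTk : T k = 0 := by
      rw [hTdef]
      simp only [LinearMap.comp_apply, LinearMap.mem_ker.mp hk, map_zero]
    have : μ i * ⟪k, b i⟫ = 0 := by
      calc μ i * ⟪k, b i⟫ = ⟪k, μ i • b i⟫ := by rw [real_inner_smul_right]
        _ = ⟪k, T (b i)⟫ := by rw [hTb i]
        _ = ⟪T k, b i⟫ := (hT k (b i)).symm
        _ = 0 := by rw [hTk, inner_zero_left]
    exact (mul_eq_zero.mp this).resolve_left hi
  -- the flow in coordinates
  have hflow : ∀ t : ℝ,
      NormedSpace.exp (-(t • (LinearMap.toContinuousLinearMap T))) x₀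
        = ∑ i, (Real.exp (-(t * μ i)) * ⟪b i, x₀⟫) • b i := by
    intro t
    have hrep : x₀ = ∑ i, ⟪b i, x₀⟫ • b i := by
      conv_lhs => rw [← b.sum_repr' x₀]
    conv_lhs => rw [hrep]
    rw [map_sum]
    refine Finset.sum_congr rfl fun i _ => ?_
    rw [map_smul]
    have heig : (-(t • (LinearMap.toContinuousLinearMap T))) (b i)
        = (-(t * μ i)) • b i := by
      simp only [ContinuousLinearMap.neg_apply, ContinuousLinearMap.smul_apply,
        LinearMap.coe_toContinuousLinearMap', hTb i, smul_smul, neg_smul]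
    rw [exp_apply_eigenvector _ _ _ heig, smul_smul, mul_comm]
  simp only [hflow]
  -- termwise limit
  have hlim : Filter.Tendsto
      (fun t : ℝ => ∑ i, (Real.exp (-(t * μ i)) * ⟪b i, x₀⟫) • b i)
      Filter.atTop
      (nhds (∑ i, ((if μ i = 0 then (1:ℝ) else 0) * ⟪b i, x₀⟫) • b i)) := by
    refine tendsto_finset_sum _ fun i _ => ?_
    refine Filter.Tendsto.smul_const ?_ (b i)
    refine Filter.Tendsto.mul_const _ ?_
    by_cases h0 : μ i = 0
    · simp only [h0, if_pos, mul_zero, neg_zero, Real.exp_zero]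
      exact tendsto_const_nhds
    · simp only [h0, if_neg, not_false_iff]
      have hpos : 0 < μ i := lt_of_le_of_ne (hμnonneg i) (Ne.symm h0)
      have h1 : Filter.Tendsto (fun t : ℝ => t * μ i) Filter.atTop Filter.atTop :=
        Filter.Tendsto.atTop_mul_const hpos Filter.tendsto_id
      have h2 : Filter.Tendsto (fun t : ℝ => -(t * μ i)) Filter.atTop Filter.atBot :=
        Filter.tendsto_neg_atTop_atBot.comp h1
      exact Real.tendsto_exp_atBot.comp h2
  -- identify the limit with the orthogonal projection
  have hproj : (Submodule.orthogonalProjectionOnto (LinearMap.ker δ) x₀ : E)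
      = ∑ i, ((if μ i = 0 then (1:ℝ) else 0) * ⟪b i, x₀⟫) • b i := by
    rw [Submodule.coe_orthogonalProjectionOnto_apply]
    refine Submodule.eq_starProjection_of_mem_of_inner_eq_zero ?_ ?_
    · refine Submodule.sum_mem _ fun i _ => ?_
      by_cases h0 : μ i = 0
      · exact Submodule.smul_mem _ _ ((hker i).mp h0)
      · simp [h0]
    · intro w hw
      have hdiff : x₀ - ∑ i, ((if μ i = 0 then (1:ℝ) else 0) * ⟪b i, x₀⟫) • b i
          = ∑ i, (if μ i = 0 then (0:ℝ) else ⟪b i, x₀⟫) • b i := by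
        nth_rewrite 1 [← b.sum_repr' x₀]
        rw [← Finset.sum_sub_distrib]
        refine Finset.sum_congr rfl fun i _ => ?_
        by_cases h0 : μ i = 0 <;> simp [h0, sub_smul]
      rw [hdiff, sum_inner]
      refine Finset.sum_eq_zero fun i _ => ?_
      by_cases h0 : μ i = 0
      · simp [h0]
      · rw [real_inner_smul_left, if_neg h0, real_inner_comm w (b i),
          horth i h0 w hw, mul_zero]
  rw [hproj]
  exact hlim
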